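/- If R is an Archimedean integral domain and P is a principal prime ideal of R, then the localization R_P is a discrete valuation ring. -/

import Mathlib

theorem stmt_3 {R : Type*} [CommRing R] [IsDomain R]
    (arch : ∀ r : R, ¬IsUnit r → (⨅ n : ℕ, Ideal.span {r ^ (n + 1)}) = ⊥)
    (P : Ideal R) (hP : P.IsPrime) (hP0 : P ≠ ⊥) (hprin : P.IsPrincipal) :
    IsDiscreteValuationRing (@Localization.AtPrime R _ P hP) := by
  obtain ⟨p, hp⟩ := hprin
  have hp0 : p ≠ 0 := by
    rintro rfl
    exact hP0 (by rw [hp]; simp)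
  have hpprime : Prime p := (Ideal.span_singleton_prime hp0).mp (show Ideal.IsPrime (Submodule.span R {p}) from hp ▸ hP)
  have hpnu : ¬IsUnit p := hpprime.not_unit
  set L := Localization.AtPrime P
  set f := algebraMap R L with hf
  have hinj : Function.Injective f :=
    IsLocalization.injective L P.primeCompl_le_nonZeroDivisors
  set π : L := f p with hπ
  have hπ0 : π ≠ 0 := fun h => hp0 (hinj (by simpa using h))
  -- span {π} is the maximal ideal
  have hmap : Ideal.span {π} = IsLocalRing.maximalIdeal L := by
    rw [← Localization.AtPrime.map_eq_maximalIdeal (I := P),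
      congrArg (Ideal.map (algebraMap R (Localization.AtPrime P))) hp,
      show Submodule.span R {p} = Ideal.span {p} from rfl, Ideal.map_span,
      Set.image_singleton]
  have hπprime : Prime π := by
    rw [← Ideal.span_singleton_prime hπ0, hmap]
    exact (IsLocalRing.maximalIdeal.isMaximal L).isPrime
  apply IsDiscreteValuationRing.ofHasUnitMulPowIrreducibleFactorization
  refine ⟨π, hπprime.irreducible, fun {x} hx => ?_⟩
  obtain ⟨⟨r, s⟩, hrs⟩ := IsLocalization.surj P.primeCompl x
  have hsu : IsUnit (f s) := IsLocalization.map_units L s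
  have hr0 : r ≠ 0 := by
    rintro rfl
    rw [map_zero] at hrs
    exact hx ((hsu.mul_left_eq_zero).mp hrs)
  -- find largest n with p^n ∣ r
  have hex : ∃ n : ℕ, ¬ p ^ (n + 1) ∣ r := by
    by_contra h
    push_neg at h
    have : r ∈ ⨅ n : ℕ, Ideal.span {p ^ (n + 1)} := by
      rw [Ideal.mem_iInf]
      exact fun n => Ideal.mem_span_singleton.mpr (h n)
    rw [arch p hpnu] at this
    exact hr0 this
  classical
  set n := Nat.find hex with hn
  have hnd : ¬ p ^ (n + 1) ∣ r := Nat.find_spec hex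
  have hd : p ^ n ∣ r := by
    rcases Nat.eq_zero_or_pos n with h0 | h0
    · simp [h0]
    · have := Nat.find_min hex (m := n - 1) (by omega)
      push_neg at this
      simpa [Nat.sub_add_cancel h0] using this
  obtain ⟨c, hc⟩ := hd
  have hpc : ¬ p ∣ c := fun ⟨d, hd'⟩ => hnd ⟨d, by rw [hc, hd']; ring⟩
  have hcu : IsUnit (f c) := by
    apply IsLocalization.map_units L (⟨c, ?_⟩ : P.primeCompl)
    intro hcP
    rw [hp] at hcP
    exact hpc (Ideal.mem_span_singleton.mp hcP)
  have key : f r = π ^ n * f c := by rw [hc, map_mul, map_pow]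
  refine ⟨n, hcu.unit * (hsu.unit⁻¹ : Lˣ), ?_⟩
  have : x * f s = π ^ n * f c := by rw [hrs, key]
  have hs0 : f s ≠ 0 := fun h => by simp [h] at hsu
  apply mul_right_cancel₀ hs0
  have e1 : (hcu.unit : L) = f c := hcu.unit_spec
  have e2 : (hsu.unit : L) = f ↑s := hsu.unit_spec
  calc π ^ n * ↑(hcu.unit * hsu.unit⁻¹) * f ↑s
      = π ^ n * f c * (↑hsu.unit⁻¹ * ↑hsu.unit) := by push_cast; rw [e1, e2]; ring
    _ = π ^ n * f c := by rw [Units.inv_mul, mul_one]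
    _ = x * f ↑s := this.symm
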